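/- Every eigenvalue of the partial transpose of a two-qubit pure state projector is at least −1/2: for any unit vector ψ ∈ ℂ² ⊗ ℂ², the operator (|ψ⟩⟨ψ|)^{T_B} has all eigenvalues ≥ −1/2. -/

import Mathlib

open Matrix BigOperators
open scoped ComplexOrder
open Complex

lemma cs2 (a b c d : ℂ) :
    (‖a*c + b*d‖)^2 ≤ ((‖a‖)^2 + (‖b‖)^2) * ((‖c‖)^2 + (‖d‖)^2) := by
  have h1 : ‖a*c + b*d‖ ≤ ‖a‖ * ‖c‖ + ‖b‖ * ‖d‖ := by
    calc ‖a*c + b*d‖ ≤ ‖a*c‖ + ‖b*d‖ := norm_add_le _ _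
    _ = _ := by simp [_root_.map_mul]
  have h0 : (0:ℝ) ≤ ‖a*c+b*d‖ := norm_nonneg _
  nlinarith [sq_nonneg (‖a‖ * ‖d‖ - ‖b‖ * ‖c‖),
    norm_nonneg a, norm_nonneg b, norm_nonneg c, norm_nonneg d]

lemma realineq (a b c d x y : ℝ) (hx : 0 ≤ x) (hy : 0 ≤ y) (ha : 0 ≤ a) (hb : 0 ≤ b)
    (hc : 0 ≤ c) (hd : 0 ≤ d) (hxa : x^2 ≤ a*b) (hyc : y^2 ≤ c*d)
    (hac : a + c = 1) (hbd : b + d = 1) : 2*(x*y) ≤ 1/2 := by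
  have h1 : a*c ≤ 1/4 := by nlinarith [sq_nonneg (a - c)]
  have h2 : b*d ≤ 1/4 := by nlinarith [sq_nonneg (b - d)]
  have hsq : (x*y)^2 ≤ (a*c)*(b*d) := by nlinarith [sq_nonneg y, mul_nonneg ha hb, sq_nonneg x]
  have h16 : (x*y)^2 ≤ 1/16 := by nlinarith [mul_nonneg hb hd]
  nlinarith [mul_nonneg hx hy]

lemma key (p0 p1 p2 p3 w0 w1 w2 w3 : ℂ)
    (hp : (‖p0‖)^2 + (‖p1‖)^2 + (‖p2‖)^2 + (‖p3‖)^2 = 1)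
    (hw : (‖w0‖)^2 + (‖w1‖)^2 + (‖w2‖)^2 + (‖w3‖)^2 = 1) :
    -(1/2 : ℝ) ≤ ((p0*w0+p1*w1) * (starRingEnd ℂ) (p0*w0+p1*w1)
      + (p0*w2+p1*w3) * (starRingEnd ℂ) (p2*w0+p3*w1)
      + (p2*w0+p3*w1) * (starRingEnd ℂ) (p0*w2+p1*w3)
      + (p2*w2+p3*w3) * (starRingEnd ℂ) (p2*w2+p3*w3)).re := by
  have h23 : 2*(‖p0*w2+p1*w3‖ * ‖p2*w0+p3*w1‖) ≤ 1/2 :=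
    realineq _ _ _ _ _ _ (norm_nonneg _) (norm_nonneg _)
      (by positivity) (by positivity) (by positivity) (by positivity)
      (cs2 p0 p1 w2 w3) (cs2 p2 p3 w0 w1) (by linarith) (by linarith)
  set D00 := p0*w0+p1*w1 with hD00
  set D01 := p0*w2+p1*w3 with hD01
  set D10 := p2*w0+p3*w1 with hD10
  set D11 := p2*w2+p3*w3 with hD11
  have h1 : (D00 * (starRingEnd ℂ) D00).re = Complex.normSq D00 := by
    rw [Complex.mul_conj]; simp
  have h4 : (D11 * (starRingEnd ℂ) D11).re = Complex.normSq D11 := by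
    rw [Complex.mul_conj]; simp
  have hmid : -(2 * (‖D01‖ * ‖D10‖))
      ≤ (D01 * (starRingEnd ℂ) D10 + D10 * (starRingEnd ℂ) D01).re := by
    have hconj : D10 * (starRingEnd ℂ) D01 = (starRingEnd ℂ) (D01 * (starRingEnd ℂ) D10) := by
      simp [_root_.map_mul]; ring
    rw [hconj, Complex.add_re, Complex.conj_re]
    have habs : ‖D01 * (starRingEnd ℂ) D10‖ = ‖D01‖ * ‖D10‖ := by
      simp [_root_.map_mul]
    have hle := abs_le.1 (Complex.abs_re_le_norm (D01 * (starRingEnd ℂ) D10))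
    rw [habs] at hle
    linarith [hle.1]
  have e : (D00 * (starRingEnd ℂ) D00 + D01 * (starRingEnd ℂ) D10
      + D10 * (starRingEnd ℂ) D01 + D11 * (starRingEnd ℂ) D11).re
      = (D00 * (starRingEnd ℂ) D00).re + (D01 * (starRingEnd ℂ) D10 + D10 * (starRingEnd ℂ) D01).re
        + (D11 * (starRingEnd ℂ) D11).re := by
    simp [Complex.add_re]; ring
  rw [e, h1, h4]
  have n1 := Complex.normSq_nonneg D00
  have n2 := Complex.normSq_nonneg D11
  linarith



/-- Partial transposition on the second factor of a bipartite matrix. -/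
noncomputable def ptB {m n : ℕ}
    (M : Matrix (Fin m × Fin n) (Fin m × Fin n) ℂ) :
    Matrix (Fin m × Fin n) (Fin m × Fin n) ℂ :=
  fun p q => M (p.1, q.2) (q.1, p.2)

/-- Every eigenvalue of the partial transpose of a two-qubit pure state
projector `|ψ⟩⟨ψ|` is at least `−1/2`. -/
theorem ptB_pure_eigenvalue_lower_bound (ψ : Fin 2 × Fin 2 → ℂ)
    (hψ : ∑ x, star (ψ x) * ψ x = 1)
    (h : (ptB (Matrix.vecMulVec ψ (star ψ))).IsHermitian) :
    ∀ i, -(1 / 2 : ℝ) ≤ h.eigenvalues i := by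
  intro i
  have e := h.eigenvalues_eq i
  set v : EuclideanSpace ℂ (Fin 2 × Fin 2) := h.eigenvectorBasis i with hvdef
  -- the eigenvector is a unit vector
  have n1 : ‖v‖ = 1 := h.eigenvectorBasis.orthonormal.1 i
  rw [EuclideanSpace.norm_eq] at n1
  have hvsum : ∑ x, ‖v x‖^2 = 1 := Real.sqrt_eq_one.mp n1
  have hw : (‖v (0,0)‖)^2 + (‖v (0,1)‖)^2
      + (‖v (1,0)‖)^2 + (‖v (1,1)‖)^2 = 1 := by
    simpa [Fintype.sum_prod_type, Fin.sum_univ_two, add_assoc]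
      using hvsum
  -- ψ is a unit vector
  have hpsum : ∑ x, (‖ψ x‖)^2 = 1 := by
    have h2 : ∑ x, (Complex.normSq (ψ x) : ℂ) = 1 := by
      simpa [Complex.star_def, ← Complex.normSq_eq_conj_mul_self] using hψ
    have h3 : ∑ x, Complex.normSq (ψ x) = 1 := by exact_mod_cast h2
    simpa [Complex.sq_norm] using h3
  have hp : (‖ψ (0,0)‖)^2 + (‖ψ (0,1)‖)^2
      + (‖ψ (1,0)‖)^2 + (‖ψ (1,1)‖)^2 = 1 := by
    simpa [Fintype.sum_prod_type, Fin.sum_univ_two, add_assoc] using hpsum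
  have hq : (star (⇑v) ⬝ᵥ ((ptB (Matrix.vecMulVec ψ (star ψ))) *ᵥ ⇑v))
      = ((ψ (0,0)*v (0,0)+ψ (0,1)*v (0,1)) * (starRingEnd ℂ) (ψ (0,0)*v (0,0)+ψ (0,1)*v (0,1))
      + (ψ (0,0)*v (1,0)+ψ (0,1)*v (1,1)) * (starRingEnd ℂ) (ψ (1,0)*v (0,0)+ψ (1,1)*v (0,1))
      + (ψ (1,0)*v (0,0)+ψ (1,1)*v (0,1)) * (starRingEnd ℂ) (ψ (0,0)*v (1,0)+ψ (0,1)*v (1,1))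
      + (ψ (1,0)*v (1,0)+ψ (1,1)*v (1,1)) * (starRingEnd ℂ) (ψ (1,0)*v (1,0)+ψ (1,1)*v (1,1))) := by
    simp [dotProduct, mulVec, ptB, Matrix.vecMulVec_apply, Fintype.sum_prod_type,
      Fin.sum_univ_two, Complex.star_def, map_add, _root_.map_mul]
    ring
  rw [e, hq]
  exact key (ψ (0,0)) (ψ (0,1)) (ψ (1,0)) (ψ (1,1)) (v (0,0)) (v (0,1)) (v (1,0)) (v (1,1)) hp hw
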